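/- Let $F$ be holomorphic and bounded on the right half-plane $\{\Re(z) > 0\}$, continuous on the closure. If $F(z_0 + n) = 0$ for some $z_0$ with $\Re(z_0) > 0$ and all natural numbers $n$, and $|F(z)| \le C e^{-\pi |\Im(z)|/2} \cdot |\Gamma(-z)|^{-1}$-type decay holds so that $\Gamma(-z)F(z)$ is bounded by $C_\delta e^{(\delta - \pi/2)|\Im z|}$ for every $\delta > 0$, then $F \equiv 0$. -/

import Mathlib

open Complex Filter Set Metric Finset Topology

noncomputable def blaschkeStep (g : ℂ → ℂ) (a : ℂ) : ℂ → ℂ :=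
  fun z => (z + (starRingEnd ℂ) a) * dslope g a z

private lemma isOpen_S : IsOpen {z : ℂ | 0 < z.re} :=
  isOpen_lt continuous_const Complex.continuous_re

private lemma norm_sq_identity (w a : ℂ) :
    ‖w - a‖ ^ 2 + 4 * w.re * a.re = ‖w + (starRingEnd ℂ) a‖ ^ 2 := by
  have h : ∀ z : ℂ, ‖z‖ ^ 2 = z.re ^ 2 + z.im ^ 2 := fun z => by
    rw [Complex.sq_norm, Complex.normSq_apply]; ring
  simp only [h, Complex.add_re, Complex.sub_re, Complex.add_im, Complex.sub_im,
    Complex.conj_re, Complex.conj_im]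
  ring

private lemma norm_axis_eq (y : ℝ) (a : ℂ) :
    ‖(y : ℂ) * I + (starRingEnd ℂ) a‖ = ‖(y : ℂ) * I - a‖ := by
  have h : (y : ℂ) * I + (starRingEnd ℂ) a = -((starRingEnd ℂ) ((y : ℂ) * I - a)) := by
    simp only [map_sub, map_mul, Complex.conj_ofReal, Complex.conj_I]
    ring
  rw [h, norm_neg, Complex.norm_conj]

/-- Phragmén–Lindelöf: a bounded holomorphic function on the right half-plane is bounded
by its bound on the imaginary axis. -/
private lemma pl_bound {g : ℂ → ℂ} {M B : ℝ} (hd : DiffContOnCl ℂ g {z : ℂ | 0 < z.re})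
    (hB : ∀ z : ℂ, 0 ≤ z.re → ‖g z‖ ≤ B) (him : ∀ y : ℝ, ‖g ((y : ℂ) * I)‖ ≤ M) :
    ∀ z : ℂ, 0 ≤ z.re → ‖g z‖ ≤ M := by
  intro z hz
  have hB0 : 0 ≤ B := le_trans (norm_nonneg _) (hB 1 (by norm_num))
  have key : ∀ n : ℕ, ‖g z‖ ≤ M + M * ‖z‖ / ((n : ℝ) + 1) := by
    intro n
    set lam : ℝ := (n : ℝ) + 1 with hlam
    have hlam0 : (0 : ℝ) < lam := by positivity
    set f : ℂ → ℂ := fun w => ((lam : ℂ) / (w + lam)) * g w with hf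
    have hne : ∀ w : ℂ, 0 ≤ w.re → w + (lam : ℂ) ≠ 0 := by
      intro w hw h
      have h2 := congrArg Complex.re h
      simp only [Complex.add_re, Complex.ofReal_re, Complex.zero_re] at h2
      linarith
    have hfac : ∀ w : ℂ, 0 ≤ w.re → ‖(lam : ℂ) / (w + lam)‖ ≤ 1 := by
      intro w hw
      rw [norm_div]
      have h1 : ‖(lam : ℂ)‖ = lam := by
        rw [Complex.norm_real, Real.norm_eq_abs, abs_of_pos hlam0]
      have h2 : lam ≤ ‖w + (lam : ℂ)‖ := by
        have h3 : lam ≤ (w + (lam : ℂ)).re := by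
          simp only [Complex.add_re, Complex.ofReal_re]; linarith
        exact h3.trans (Complex.re_le_norm _)
      rw [h1]
      exact div_le_one_of_le₀ h2 (norm_nonneg _)
    have hd' : DiffContOnCl ℂ f {z : ℂ | 0 < z.re} := by
      constructor
      · exact ((differentiableOn_const _).div (differentiableOn_id.add_const _)
          (fun w hw => hne w (le_of_lt hw))).mul hd.differentiableOn
      · rw [closure_setOf_lt_re]
        refine (ContinuousOn.div continuousOn_const
          (continuous_id.add continuous_const).continuousOn (fun w hw => hne w hw)).mul ?_
        have := hd.continuousOn
        rwa [closure_setOf_lt_re] at this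
    have hbnd : ∀ w : ℂ, 0 ≤ w.re → ‖f w‖ ≤ B := by
      intro w hw
      calc ‖f w‖ = ‖(lam : ℂ) / (w + lam)‖ * ‖g w‖ := norm_mul _ _
        _ ≤ 1 * B := mul_le_mul (hfac w hw) (hB w hw) (norm_nonneg _) zero_le_one
        _ = B := one_mul B
    have hre : Tendsto (fun x : ℝ => f x) atTop (𝓝 0) := by
      apply squeeze_zero_norm' (a := fun x : ℝ => B * (lam / (x + lam)))
      · filter_upwards [eventually_ge_atTop (0 : ℝ)] with x hx
        have hxl : (0 : ℝ) < x + lam := by linarith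
        have hxre : (0 : ℝ) ≤ ((x : ℂ)).re := by simp [hx]
        have heq : ‖f (x : ℂ)‖ = (lam / (x + lam)) * ‖g (x : ℂ)‖ := by
          rw [norm_mul]
          congr 1
          have h4 : ((x : ℂ) + (lam : ℂ)) = ((x + lam : ℝ) : ℂ) := by push_cast; ring
          rw [h4, ← Complex.ofReal_div, Complex.norm_real, Real.norm_eq_abs,
            abs_of_pos (div_pos hlam0 hxl)]
        rw [heq]
        calc (lam / (x + lam)) * ‖g (x : ℂ)‖ ≤ (lam / (x + lam)) * B :=
              mul_le_mul_of_nonneg_left (hB _ hxre) (by positivity)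
          _ = B * (lam / (x + lam)) := mul_comm _ _
      · have h1 : Tendsto (fun x : ℝ => x + lam) atTop atTop :=
          tendsto_atTop_add_const_right _ _ tendsto_id
        have h2 : Tendsto (fun x : ℝ => lam / (x + lam)) atTop (𝓝 0) := by
          have := (tendsto_inv_atTop_zero.comp h1).const_mul lam
          simpa [div_eq_mul_inv, Function.comp] using this
        simpa using h2.const_mul B
    have him' : ∀ x : ℝ, ‖f ((x : ℂ) * I)‖ ≤ M := by
      intro x
      have hre0 : (0:ℝ) ≤ ((x : ℂ) * I).re := by simp
      calc ‖f ((x : ℂ) * I)‖ = ‖(lam : ℂ) / ((x : ℂ) * I + lam)‖ * ‖g ((x : ℂ) * I)‖ :=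
            norm_mul _ _
        _ ≤ 1 * M := mul_le_mul (hfac _ hre0) (him x) (norm_nonneg _) zero_le_one
        _ = M := one_mul M
    have hfz : ‖f z‖ ≤ M := by
      refine PhragmenLindelof.right_half_plane_of_tendsto_zero_on_real hd'
        ⟨1, one_lt_two, 0, Asymptotics.IsBigO.of_bound B ?_⟩ hre him' hz
      rw [Filter.eventually_inf_principal]
      filter_upwards with w hw
      have := hbnd w (le_of_lt hw)
      simpa using this
    have hq : ‖f z‖ = ‖(lam : ℂ) / (z + lam)‖ * ‖g z‖ := norm_mul _ _
    have hnz : 0 < ‖z + (lam : ℂ)‖ := norm_pos_iff.2 (hne z hz)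
    have h1' : ‖z + (lam : ℂ)‖ ≤ ‖z‖ + lam := by
      have := norm_add_le z ((lam : ℂ))
      simpa [Complex.norm_real, Real.norm_eq_abs, abs_of_pos hlam0] using this
    have hlow : lam / (‖z‖ + lam) ≤ ‖(lam : ℂ) / (z + lam)‖ := by
      rw [norm_div, Complex.norm_real, Real.norm_eq_abs, abs_of_pos hlam0]
      gcongr
    have hmain : (lam / (‖z‖ + lam)) * ‖g z‖ ≤ M := by
      calc (lam / (‖z‖ + lam)) * ‖g z‖ ≤ ‖(lam : ℂ) / (z + lam)‖ * ‖g z‖ :=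
            mul_le_mul_of_nonneg_right hlow (norm_nonneg _)
        _ = ‖f z‖ := hq.symm
        _ ≤ M := hfz
    have hzl : 0 < ‖z‖ + lam := by positivity
    have h3 : lam * ‖g z‖ ≤ M * (‖z‖ + lam) := by
      rw [div_mul_eq_mul_div, div_le_iff₀ hzl] at hmain
      linarith
    have h4 : ‖g z‖ ≤ (M * (‖z‖ + lam)) / lam := by
      rw [le_div_iff₀ hlam0]; linarith
    calc ‖g z‖ ≤ (M * (‖z‖ + lam)) / lam := h4
      _ = M + M * ‖z‖ / lam := by field_simp; ring
  have h0 : Tendsto (fun n : ℕ => M * ‖z‖ / ((n : ℝ) + 1)) atTop (𝓝 0) := by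
    have := (tendsto_const_div_atTop_nhds_zero_nat (M * ‖z‖)).comp (tendsto_add_atTop_nat 1)
    simpa [Function.comp_def] using this
  have hlim : Tendsto (fun n : ℕ => M + M * ‖z‖ / ((n : ℝ) + 1)) atTop (𝓝 (M + 0)) :=
    tendsto_const_nhds.add h0
  have := ge_of_tendsto' hlim key
  simpa using this

private lemma blaschkeStep_spec {g : ℂ → ℂ} {M : ℝ} {a : ℂ}
    (hd : DiffContOnCl ℂ g {z : ℂ | 0 < z.re}) (hM : ∀ z : ℂ, 0 ≤ z.re → ‖g z‖ ≤ M)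
    (ha : 0 < a.re) (hga : g a = 0) :
    DiffContOnCl ℂ (blaschkeStep g a) {z : ℂ | 0 < z.re} ∧
    (∀ z : ℂ, 0 ≤ z.re → ‖blaschkeStep g a z‖ ≤ M) ∧
    (∀ z : ℂ, blaschkeStep g a z * (z - a) = (z + (starRingEnd ℂ) a) * g z) := by
  have hM0 : 0 ≤ M := le_trans (norm_nonneg _) (hM 0 (by simp))
  have hmem : {z : ℂ | 0 < z.re} ∈ 𝓝 a := isOpen_S.mem_nhds ha
  have hds : DifferentiableOn ℂ (dslope g a) {z : ℂ | 0 < z.re} :=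
    (Complex.differentiableOn_dslope hmem).mpr hd.differentiableOn
  have hgc : ContinuousOn g {z : ℂ | 0 ≤ z.re} := by
    have := hd.continuousOn; rwa [closure_setOf_lt_re] at this
  have hdsc : ContinuousOn (dslope g a) {z : ℂ | 0 ≤ z.re} := by
    intro z hz
    by_cases hza : z = a
    · subst hza
      exact (hds.differentiableAt hmem).continuousAt.continuousWithinAt
    · have hcw : ContinuousWithinAt (fun w => (g w - g a) / (w - a)) {z : ℂ | 0 ≤ z.re} z :=
        ((hgc z hz).sub continuousWithinAt_const).div
          (continuousWithinAt_id.sub continuousWithinAt_const) (sub_ne_zero.2 hza)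
      refine hcw.congr_of_eventuallyEq ?_ ?_
      · have hopen : {w : ℂ | w ≠ a} ∈ 𝓝 z := isOpen_ne.mem_nhds hza
        filter_upwards [nhdsWithin_le_nhds hopen] with w hw
        rw [dslope_of_ne _ hw, slope_def_field]
      · rw [dslope_of_ne _ hza, slope_def_field]
  have hbl_diff : DiffContOnCl ℂ (blaschkeStep g a) {z : ℂ | 0 < z.re} := by
    constructor
    · exact (differentiableOn_id.add_const _).mul hds
    · rw [closure_setOf_lt_re]
      exact ((continuous_id.add continuous_const).continuousOn).mul hdsc
  have hrel : ∀ z : ℂ, blaschkeStep g a z * (z - a) = (z + (starRingEnd ℂ) a) * g z := by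
    intro z
    by_cases hza : z = a
    · subst hza; simp [blaschkeStep, hga]
    · have h0 : z - a ≠ 0 := sub_ne_zero.2 hza
      show (z + (starRingEnd ℂ) a) * dslope g a z * (z - a) = _
      rw [dslope_of_ne _ hza, slope_def_field, hga, sub_zero]
      field_simp
  have him : ∀ y : ℝ, ‖blaschkeStep g a ((y : ℂ) * I)‖ ≤ M := by
    intro y
    have h0 : ((y : ℂ) * I - a) ≠ 0 := by
      intro h
      have h2 := congrArg Complex.re h
      simp only [Complex.sub_re, Complex.mul_re, Complex.ofReal_re, Complex.I_re,
        Complex.ofReal_im, Complex.I_im, Complex.zero_re] at h2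
      simp at h2
      linarith
    have hpos : 0 < ‖(y : ℂ) * I - a‖ := norm_pos_iff.2 h0
    have h1 := congrArg norm (hrel ((y : ℂ) * I))
    rw [norm_mul, norm_mul, norm_axis_eq, mul_comm (‖(y : ℂ) * I - a‖)] at h1
    have heq : ‖blaschkeStep g a ((y : ℂ) * I)‖ = ‖g ((y : ℂ) * I)‖ :=
      mul_right_cancel₀ hpos.ne' h1
    rw [heq]
    exact hM _ (by simp)
  have hMa : ∀ z : ℂ, 0 ≤ z.re → 2 * ‖a‖ + 1 ≤ ‖z‖ → ‖blaschkeStep g a z‖ ≤ 3 * M := by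
    intro z hz hR
    have h1 : ‖a‖ + 1 ≤ ‖z - a‖ := by
      have := norm_sub_norm_le z a
      linarith [norm_nonneg a]
    have hpos : 0 < ‖z - a‖ := by linarith [norm_nonneg a]
    have h2 : ‖z + (starRingEnd ℂ) a‖ ≤ ‖z‖ + ‖a‖ := by
      have h2' := norm_add_le z ((starRingEnd ℂ) a)
      have h2'' : ‖(starRingEnd ℂ) a‖ = ‖a‖ := by
        rw [Complex.norm_conj]
      rwa [h2''] at h2'
    have h3 := congrArg norm (hrel z)
    rw [norm_mul, norm_mul] at h3
    have h4 : ‖blaschkeStep g a z‖ = ‖z + (starRingEnd ℂ) a‖ * ‖g z‖ / ‖z - a‖ := by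
      rw [eq_div_iff hpos.ne']; exact h3
    rw [h4, div_le_iff₀ hpos]
    have h5 : ‖z + (starRingEnd ℂ) a‖ * ‖g z‖ ≤ (‖z‖ + ‖a‖) * M :=
      mul_le_mul h2 (hM z hz) (norm_nonneg _) (by positivity)
    have h6 : (‖z‖ + ‖a‖) * M ≤ 3 * M * ‖z - a‖ := by
      nlinarith [norm_sub_norm_le z a, norm_nonneg a, norm_nonneg z]
    linarith
  obtain ⟨B₀, hB₀⟩ : ∃ B₀, ∀ z ∈ (Metric.closedBall (0 : ℂ) (2 * ‖a‖ + 1)) ∩ {z : ℂ | 0 ≤ z.re},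
      ‖blaschkeStep g a z‖ ≤ B₀ := by
    apply ((isCompact_closedBall _ _).inter_right
      (isClosed_le continuous_const Complex.continuous_re)).exists_bound_of_continuousOn
    have := hbl_diff.continuousOn
    rw [closure_setOf_lt_re] at this
    exact this.mono inter_subset_right
  have hbound : ∀ z : ℂ, 0 ≤ z.re → ‖blaschkeStep g a z‖ ≤ max B₀ (3 * M) := by
    intro z hz
    by_cases hzR : ‖z‖ ≤ 2 * ‖a‖ + 1
    · exact le_trans (hB₀ z ⟨by simpa [mem_closedBall_zero_iff] using hzR, hz⟩) (le_max_left _ _)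
    · exact le_trans (hMa z hz (le_of_not_ge hzR)) (le_max_right _ _)
  exact ⟨hbl_diff, pl_bound hbl_diff hbound him, hrel⟩

noncomputable def blaschkeSeq (F : ℂ → ℂ) (z₀ : ℂ) : ℕ → ℂ → ℂ
  | 0 => F
  | (N + 1) => blaschkeStep (blaschkeSeq F z₀ N) (z₀ + N)

theorem uniqueness_from_vanishing_on_naturals (F : ℂ → ℂ)
    (hdiff : DifferentiableOn ℂ F {z : ℂ | 0 < z.re})
    (hbdd : ∃ M : ℝ, ∀ z : ℂ, 0 < z.re → ‖F z‖ ≤ M)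
    (hcont : ContinuousOn F {z : ℂ | 0 ≤ z.re})
    (z₀ : ℂ) (hz₀ : 0 < z₀.re) (hzero : ∀ n : ℕ, F (z₀ + n) = 0)
    (hdecay : ∀ δ : ℝ, 0 < δ → ∃ C : ℝ, 0 < C ∧ ∀ z : ℂ, 0 < z.re →
      ‖Complex.Gamma (-z) * F z‖ ≤ C * Real.exp ((δ - Real.pi / 2) * |z.im|)) :
    ∀ z : ℂ, 0 < z.re → F z = 0 := by
  intro w hw
  obtain ⟨M₀, hM₀⟩ := hbdd
  set M : ℝ := max M₀ 0 with hMdef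
  have hM0 : 0 ≤ M := le_max_right _ _
  have hM : ∀ z : ℂ, 0 ≤ z.re → ‖F z‖ ≤ M := by
    intro z hz
    rcases lt_or_eq_of_le hz with h | h
    · exact (hM₀ z h).trans (le_max_left _ _)
    · have hconv : Tendsto (fun t : ℝ => z + (t : ℂ)) (𝓝[>] (0 : ℝ))
          (𝓝[{z : ℂ | 0 ≤ z.re}] z) := by
        rw [tendsto_nhdsWithin_iff]
        constructor
        · have h1 : Tendsto (fun t : ℝ => z + (t : ℂ)) (𝓝 (0 : ℝ)) (𝓝 z) := by
            have hcz : Continuous (fun t : ℝ => z + (t : ℂ)) :=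
              continuous_const.add Complex.continuous_ofReal
            simpa using hcz.tendsto (0 : ℝ)
          exact h1.mono_left nhdsWithin_le_nhds
        · filter_upwards [self_mem_nhdsWithin] with t ht
          simp only [mem_setOf_eq, Complex.add_re, Complex.ofReal_re]
          have : (0 : ℝ) < t := ht
          linarith
      have hF : Tendsto (fun t : ℝ => F (z + t)) (𝓝[>] (0 : ℝ)) (𝓝 (F z)) :=
        (hcont z hz).tendsto.comp hconv
      refine le_of_tendsto hF.norm ?_
      filter_upwards [self_mem_nhdsWithin] with t ht
      have ht' : (0 : ℝ) < t := ht
      have hre : 0 < (z + (t : ℂ)).re := by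
        simp only [Complex.add_re, Complex.ofReal_re, ← h]
        linarith
      exact (hM₀ _ hre).trans (le_max_left _ _)
  set a : ℕ → ℂ := fun n => z₀ + n with ha_def
  have ha_re : ∀ n : ℕ, (a n).re = z₀.re + n := fun n => by
    simp [ha_def, Complex.add_re, Complex.natCast_re]
  have ha_pos : ∀ n : ℕ, 0 < (a n).re := fun n => by
    rw [ha_re]; positivity
  set G := blaschkeSeq F z₀ with hG
  have hinv : ∀ N : ℕ, DiffContOnCl ℂ (G N) {z : ℂ | 0 < z.re} ∧
      (∀ z : ℂ, 0 ≤ z.re → ‖G N z‖ ≤ M) ∧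
      (∀ m : ℕ, N ≤ m → G N (a m) = 0) ∧
      (∀ z : ℂ, F z * ∏ n ∈ Finset.range N, (z + (starRingEnd ℂ) (a n)) =
        G N z * ∏ n ∈ Finset.range N, (z - a n)) := by
    intro N
    induction N with
    | zero =>
      exact ⟨⟨hdiff, by rw [closure_setOf_lt_re]; exact hcont⟩, hM,
        fun m _ => hzero m, fun z => by simp [hG, blaschkeSeq]⟩
    | succ N ih =>
      obtain ⟨ih1, ih2, ih3, ih4⟩ := ih
      obtain ⟨h1, h2, h3⟩ := blaschkeStep_spec ih1 ih2 (ha_pos N) (ih3 N le_rfl)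
      have hGsucc : G (N + 1) = blaschkeStep (G N) (a N) := rfl
      refine ⟨by rw [hGsucc]; exact h1, by rw [hGsucc]; exact h2, ?_, ?_⟩
      · intro m hm
        have hma : a m - a N ≠ 0 := by
          have heq : a m - a N = (m : ℂ) - (N : ℂ) := by simp only [ha_def]; ring
          rw [heq]
          exact sub_ne_zero.2 (by exact_mod_cast (by omega : m ≠ N))
        have h5 := h3 (a m)
        rw [ih3 m (by omega), mul_zero] at h5
        rcases mul_eq_zero.1 h5 with h | h
        · rw [hGsucc]; exact h
        · exact absurd h hma
      · intro z
        have e1 := ih4 z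
        have e2 := h3 z
        rw [Finset.prod_range_succ, Finset.prod_range_succ, hGsucc]
        linear_combination (z + (starRingEnd ℂ) (a N)) * e1 -
          (∏ n ∈ Finset.range N, (z - a n)) * e2
  by_cases hwn : ∃ m : ℕ, w = a m
  · obtain ⟨m, rfl⟩ := hwn; exact hzero m
  push_neg at hwn
  have hPpos : ∀ n : ℕ, 0 < ‖w + (starRingEnd ℂ) (a n)‖ := by
    intro n
    have hre : 0 < (w + (starRingEnd ℂ) (a n)).re := by
      simp only [Complex.add_re, Complex.conj_re]
      have := ha_pos n; linarith
    exact lt_of_lt_of_le hre (Complex.re_le_norm _)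
  set r : ℕ → ℝ := fun n => ‖w - a n‖ / ‖w + (starRingEnd ℂ) (a n)‖ with hr_def
  have hFw : ∀ N : ℕ, ‖F w‖ ≤ M * ∏ n ∈ Finset.range N, r n := by
    intro N
    obtain ⟨_, h2, _, h4⟩ := hinv N
    have he := congrArg norm (h4 w)
    rw [norm_mul, norm_mul, norm_prod, norm_prod] at he
    set P := ∏ n ∈ Finset.range N, ‖w + (starRingEnd ℂ) (a n)‖ with hP
    set Q := ∏ n ∈ Finset.range N, ‖w - a n‖ with hQ
    have hPp : 0 < P := Finset.prod_pos (fun n _ => hPpos n)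
    have hQn : 0 ≤ Q := Finset.prod_nonneg (fun n _ => norm_nonneg _)
    have h5 : ‖F w‖ * P ≤ M * Q := by
      calc ‖F w‖ * P = ‖G N w‖ * Q := he
        _ ≤ M * Q := mul_le_mul_of_nonneg_right (h2 w hw.le) hQn
    have hprod : ∏ n ∈ Finset.range N, r n = Q / P := by
      simp only [hr_def, hQ, hP]
      rw [Finset.prod_div_distrib]
    rw [hprod, ← mul_div_assoc, le_div_iff₀ hPp]
    exact h5
  set K : ℝ := max (‖w‖ + ‖z₀‖) 1 with hK
  have hK1 : 1 ≤ K := le_max_right _ _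
  have hKge : ‖w‖ + ‖z₀‖ ≤ K := le_max_left _ _
  set m0 : ℝ := min z₀.re 1 with hm0
  have hm0p : 0 < m0 := lt_min hz₀ one_pos
  set c : ℝ := 4 * w.re * m0 / K ^ 2 with hc
  have hcp : 0 < c := div_pos (mul_pos (mul_pos four_pos hw) hm0p)
    (pow_pos (lt_of_lt_of_le one_pos hK1) 2)
  have hrn : ∀ n : ℕ, r n ≤ Real.exp (-(c / (2 * ((n : ℝ) + 1)))) := by
    intro n
    have hDle : ‖w + (starRingEnd ℂ) (a n)‖ ≤ K * ((n : ℝ) + 1) := by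
      have hconj : ‖(starRingEnd ℂ) (a n)‖ = ‖a n‖ := by
        rw [Complex.norm_conj]
      have han : ‖a n‖ ≤ ‖z₀‖ + n := by
        have := norm_add_le z₀ ((n : ℕ) : ℂ)
        simpa [ha_def, Complex.norm_natCast] using this
      calc ‖w + (starRingEnd ℂ) (a n)‖ ≤ ‖w‖ + ‖(starRingEnd ℂ) (a n)‖ := norm_add_le _ _
        _ = ‖w‖ + ‖a n‖ := by rw [hconj]
        _ ≤ ‖w‖ + (‖z₀‖ + n) := by linarith
        _ ≤ K * ((n : ℝ) + 1) := by nlinarith [Nat.cast_nonneg (α := ℝ) n]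
    have hre_ge : m0 * ((n : ℝ) + 1) ≤ (a n).re := by
      rw [ha_re]
      have h1 : m0 ≤ z₀.re := min_le_left _ _
      have h2 : m0 ≤ 1 := min_le_right _ _
      nlinarith [Nat.cast_nonneg (α := ℝ) n]
    have hDpos := hPpos n
    have hsq : (r n) ^ 2 ≤ 1 - c / ((n : ℝ) + 1) := by
      have hid := norm_sq_identity w (a n)
      have hd2 : ‖w + (starRingEnd ℂ) (a n)‖ ^ 2 ≤ K ^ 2 * ((n : ℝ) + 1) ^ 2 := by
        nlinarith [norm_nonneg (w + (starRingEnd ℂ) (a n))]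
      have hnum : c / ((n : ℝ) + 1) * ‖w + (starRingEnd ℂ) (a n)‖ ^ 2
          ≤ 4 * w.re * (a n).re := by
        calc c / ((n : ℝ) + 1) * ‖w + (starRingEnd ℂ) (a n)‖ ^ 2
            ≤ c / ((n : ℝ) + 1) * (K ^ 2 * ((n : ℝ) + 1) ^ 2) :=
              mul_le_mul_of_nonneg_left hd2 (by positivity)
          _ = 4 * w.re * m0 * ((n : ℝ) + 1) := by
              rw [hc]
              have hKne : K ≠ 0 := by positivity
              have hnne : ((n : ℝ) + 1) ≠ 0 := by positivity
              field_simp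
          _ ≤ 4 * w.re * (a n).re := by nlinarith
      have hD2pos : 0 < ‖w + (starRingEnd ℂ) (a n)‖ ^ 2 := by positivity
      have hrn2 : (r n) ^ 2 = ‖w - a n‖ ^ 2 / ‖w + (starRingEnd ℂ) (a n)‖ ^ 2 := by
        simp only [hr_def]; rw [div_pow]
      rw [hrn2, div_le_iff₀ hD2pos]
      nlinarith
    have hrpos : 0 ≤ r n := div_nonneg (norm_nonneg _) (norm_nonneg _)
    have hexp2 : (Real.exp (-(c / (2 * ((n : ℝ) + 1))))) ^ 2 = Real.exp (-(c / ((n : ℝ) + 1))) := by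
      rw [sq, ← Real.exp_add]
      congr 1
      field_simp
      ring
    have h1e : 1 - c / ((n : ℝ) + 1) ≤ Real.exp (-(c / ((n : ℝ) + 1))) := by
      have := Real.add_one_le_exp (-(c / ((n : ℝ) + 1)))
      linarith
    have hle2 : (r n) ^ 2 ≤ (Real.exp (-(c / (2 * ((n : ℝ) + 1))))) ^ 2 := by
      rw [hexp2]; exact hsq.trans h1e
    exact (pow_le_pow_iff_left₀ hrpos (Real.exp_pos _).le two_ne_zero).1 hle2
  have hprod_le : ∀ N : ℕ, ∏ n ∈ Finset.range N, r n ≤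
      Real.exp (-(c / 2) * ∑ n ∈ Finset.range N, 1 / ((n : ℝ) + 1)) := by
    intro N
    calc ∏ n ∈ Finset.range N, r n
        ≤ ∏ n ∈ Finset.range N, Real.exp (-(c / (2 * ((n : ℝ) + 1)))) :=
          Finset.prod_le_prod (fun n _ => div_nonneg (norm_nonneg _) (norm_nonneg _))
            (fun n _ => hrn n)
      _ = Real.exp (∑ n ∈ Finset.range N, -(c / (2 * ((n : ℝ) + 1)))) := (Real.exp_sum _ _).symm
      _ = Real.exp (-(c / 2) * ∑ n ∈ Finset.range N, 1 / ((n : ℝ) + 1)) := by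
          congr 1
          rw [Finset.mul_sum]
          refine Finset.sum_congr rfl fun n _ => ?_
          have : ((n : ℝ) + 1) ≠ 0 := by positivity
          field_simp
  have hlim : Tendsto (fun N : ℕ => M * Real.exp (-(c / 2) *
      ∑ n ∈ Finset.range N, 1 / ((n : ℝ) + 1))) atTop (𝓝 0) := by
    have h1 : Tendsto (fun N : ℕ => -(c / 2) * ∑ n ∈ Finset.range N, 1 / ((n : ℝ) + 1))
        atTop atBot :=
      Tendsto.const_mul_atTop_of_neg (by linarith) Real.tendsto_sum_range_one_div_nat_succ_atTop
    have h2 := Real.tendsto_exp_atBot.comp h1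
    simpa using h2.const_mul M
  have hF0 : ‖F w‖ ≤ 0 :=
    ge_of_tendsto' hlim fun N =>
      (hFw N).trans (mul_le_mul_of_nonneg_left (hprod_le N) hM0)
  simpa using norm_le_zero_iff.1 hF0
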